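/- For any priority ordering o of the states, the fluid equilibrium (q^o, ν^o) is a feasible solution of OriginalFluid; moreover, if the partially-served state p ≠ ⊥, then Σ_{i∈S} ν^o_i = μ. -/

import Mathlib

open scoped Classical
open Finset

/-- A finite tree-structured Markov chain: a finite state space partitioned into
levels `0, …, L-1`, a root `r` at level `0`, a parent map `pa` (with `pa r = r` by
convention), and transition probabilities `p i ∈ (0,1]` of being reached from the
parent, with `p r = 1`. -/
structure TreeMC (S : Type*) [Fintype S] [DecidableEq S] where
  /-- the number of levels -/
  L : ℕ
  /-- the root -/
  r : S
  /-- the parent map (with `pa r = r` by convention) -/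
  pa : S → S
  /-- the level of each state -/
  level : S → ℕ
  /-- the probability of being reached from the parent -/
  p : S → ℝ
  level_lt : ∀ i, level i < L
  level_r : level r = 0
  root_unique : ∀ i, level i = 0 → i = r
  pa_r : pa r = r
  level_pa : ∀ i, i ≠ r → level (pa i) + 1 = level i
  p_pos : ∀ i, 0 < p i
  p_le_one : ∀ i, p i ≤ 1
  p_r : p r = 1

namespace TreeMC

variable {S : Type*} [Fintype S] [DecidableEq S] (M : TreeMC S)

/-- The ancestors of `i`: states on the path from the root to `i` (both included). -/
noncomputable def anc (i : S) : Finset S :=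
  Finset.univ.filter fun a => ∃ n : ℕ, M.pa^[n] i = a

/-- The subtree of `i`: all states having `i` as an ancestor. -/
noncomputable def subt (i : S) : Finset S :=
  Finset.univ.filter fun k => i ∈ M.anc k

/-- The subtree of a set of states. -/
noncomputable def subF (X : Finset S) : Finset S :=
  Finset.univ.filter fun k => ∃ i ∈ X, k ∈ M.subt i

/-- `π i`: the probability that a job passes through state `i`. -/
noncomputable def pi (i : S) : ℝ :=
  ∏ a ∈ M.anc i, M.p a

/-- The children of `i`. -/
noncomputable def child (i : S) : Finset S :=
  Finset.univ.filter fun k => k ≠ M.r ∧ M.pa k = i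

/-- `T` is the top set of `X`: a subset of `X` whose subtree covers `X` and in which
no state lies in the subtree of a different state. -/
def IsTopSet (X T : Finset S) : Prop :=
  T ⊆ X ∧ X ⊆ M.subF T ∧ ∀ i ∈ T, ∀ k ∈ T, i ≠ k → k ∉ M.subt i

/-- Expected future cost conditional on being in state `a`. -/
noncomputable def cf (c : S → ℝ) (a : S) : ℝ :=
  ∑ i ∈ M.subt a, c i * M.pi i / M.pi a

/-- `V` is the ski-rental value function:
`V γ i = min (γ, c i + Σ_{k ∈ child i} p k · V γ k)`. -/
def IsSkiValue (c : S → ℝ) (V : ℝ → S → ℝ) : Prop :=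
  ∀ γ : ℝ, ∀ i : S, V γ i = min γ (c i + ∑ k ∈ M.child i, M.p k * V γ k)

/-- Expected future cost-to-go `V^f`. -/
noncomputable def Vf (V : ℝ → S → ℝ) (γ : ℝ) (i : S) : ℝ :=
  ∑ k ∈ M.child i, M.p k * V γ k

/-- The candidate optimal state duals `β*(γ)`. -/
noncomputable def betaStar (c : S → ℝ) (V : ℝ → S → ℝ) (γ : ℝ) (i : S) : ℝ :=
  max 0 (c i + M.Vf V γ i - γ)

/-- Feasibility for the dual program `D*(γ)`. -/
def DualFeasible (c : S → ℝ) (γ : ℝ) (β : S → ℝ) : Prop :=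
  (∀ i, 0 ≤ β i) ∧ ∀ a, M.cf c a ≤ γ + ∑ i ∈ M.subt a, β i * M.pi i / M.pi a

/-- Feasibility for the fluid LP (OriginalFluid). -/
def OrigFeasible (lam mu : ℝ) (q ν : S → ℝ) : Prop :=
  (∀ i, 0 ≤ q i) ∧ (∀ i, 0 ≤ ν i) ∧ q M.r = lam ∧
    (∀ i, i ≠ M.r → q i = (q (M.pa i) - ν (M.pa i)) * M.p i) ∧
    (∀ i, ν i ≤ q i) ∧ ∑ i : S, ν i ≤ mu

/-- Feasibility for the fluid LP (SimplerFluid). -/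
def SimpFeasible (lam mu : ℝ) (ν : S → ℝ) : Prop :=
  (∀ i, 0 ≤ ν i) ∧ (∀ i, ∑ a ∈ M.anc i, ν a * M.pi i / M.pi a ≤ lam * M.pi i) ∧
    ∑ i : S, ν i ≤ mu

end TreeMC

namespace TreeMC

variable {S : Type*} [Fintype S] [DecidableEq S] (M : TreeMC S)

lemma mem_anc_iff {i a : S} : a ∈ M.anc i ↔ ∃ n : ℕ, M.pa^[n] i = a := by
  simp [anc]

lemma self_mem_anc (i : S) : i ∈ M.anc i := M.mem_anc_iff.mpr ⟨0, rfl⟩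

lemma pa_mem_anc (i : S) : M.pa i ∈ M.anc i := M.mem_anc_iff.mpr ⟨1, rfl⟩

lemma anc_trans {a b c : S} (hab : a ∈ M.anc b) (hbc : b ∈ M.anc c) : a ∈ M.anc c := by
  obtain ⟨n, hn⟩ := M.mem_anc_iff.mp hbc
  obtain ⟨k, hk⟩ := M.mem_anc_iff.mp hab
  exact M.mem_anc_iff.mpr ⟨k + n, by rw [Function.iterate_add_apply, hn, hk]⟩

lemma pa_iterate_r (n : ℕ) : M.pa^[n] M.r = M.r := by
  induction n with
  | zero => rfl
  | succ k ih => rw [Function.iterate_succ_apply', ih, M.pa_r]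

lemma anc_r : M.anc M.r = {M.r} := by
  ext a
  simp only [mem_anc_iff, Finset.mem_singleton]
  constructor
  · rintro ⟨n, rfl⟩
    exact M.pa_iterate_r n
  · rintro rfl
    exact ⟨0, rfl⟩

lemma level_pa_le (i : S) : M.level (M.pa i) ≤ M.level i := by
  by_cases h : i = M.r
  · subst h; rw [M.pa_r]
  · have := M.level_pa i h; omega

lemma level_iterate_le (n : ℕ) (i : S) : M.level (M.pa^[n] i) ≤ M.level i := by
  induction n with
  | zero => exact le_refl _
  | succ k ih => rw [Function.iterate_succ_apply']; exact (M.level_pa_le _).trans ih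

lemma level_le_of_mem_anc {a i : S} (h : a ∈ M.anc i) : M.level a ≤ M.level i := by
  obtain ⟨n, rfl⟩ := M.mem_anc_iff.mp h
  exact M.level_iterate_le n i

lemma not_mem_anc_pa {i : S} (hi : i ≠ M.r) : i ∉ M.anc (M.pa i) := by
  intro h
  have h1 := M.level_le_of_mem_anc h
  have h2 := M.level_pa i hi
  omega

lemma anc_eq_insert {i : S} (hi : i ≠ M.r) : M.anc i = insert i (M.anc (M.pa i)) := by
  ext a
  simp only [Finset.mem_insert, mem_anc_iff]
  constructor
  · rintro ⟨n, rfl⟩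
    cases n with
    | zero => left; rfl
    | succ k => right; exact ⟨k, (Function.iterate_succ_apply M.pa k i).symm⟩
  · rintro (rfl | ⟨n, rfl⟩)
    · exact ⟨0, rfl⟩
    · exact ⟨n + 1, Function.iterate_succ_apply M.pa n i⟩

lemma pi_pos (i : S) : 0 < M.pi i := Finset.prod_pos fun a _ => M.p_pos a

lemma pi_r : M.pi M.r = 1 := by
  rw [pi, anc_r, Finset.prod_singleton, M.p_r]

lemma pi_eq {i : S} (hi : i ≠ M.r) : M.pi i = M.p i * M.pi (M.pa i) := by
  rw [pi, M.anc_eq_insert hi, Finset.prod_insert (M.not_mem_anc_pa hi)]; rfl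

lemma mem_subt {i k : S} : k ∈ M.subt i ↔ i ∈ M.anc k := by simp [subt]

lemma self_mem_subt (i : S) : i ∈ M.subt i := M.mem_subt.mpr (M.self_mem_anc i)

lemma mem_subF {X : Finset S} {k : S} : k ∈ M.subF X ↔ ∃ i ∈ X, i ∈ M.anc k := by
  simp [subF, mem_subt]

lemma subset_subF (X : Finset S) : X ⊆ M.subF X :=
  fun i hi => M.mem_subF.mpr ⟨i, hi, M.self_mem_anc i⟩

lemma subF_trans {X T : Finset S} (h : X ⊆ M.subF T) : M.subF X ⊆ M.subF T := by
  intro k hk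
  obtain ⟨j, hj, hjk⟩ := M.mem_subF.mp hk
  obtain ⟨t, ht, htj⟩ := M.mem_subF.mp (h hj)
  exact M.mem_subF.mpr ⟨t, ht, M.anc_trans htj hjk⟩

lemma mem_subF_of_pa {X : Finset S} {i : S} (h : M.pa i ∈ M.subF X) : i ∈ M.subF X := by
  obtain ⟨j, hj, hji⟩ := M.mem_subF.mp h
  exact M.mem_subF.mpr ⟨j, hj, M.anc_trans hji (M.pa_mem_anc i)⟩

lemma mem_subt_pa_iff {i pp : S} (hi : i ≠ M.r) :
    M.pa i ∈ M.subt pp ↔ (i ∈ M.subt pp ∧ i ≠ pp) := by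
  constructor
  · intro h
    have h1 : pp ∈ M.anc i := M.anc_trans (M.mem_subt.mp h) (M.pa_mem_anc i)
    refine ⟨M.mem_subt.mpr h1, ?_⟩
    rintro rfl
    exact M.not_mem_anc_pa hi (M.mem_subt.mp h)
  · rintro ⟨h1, h2⟩
    have h3 := M.mem_subt.mp h1
    rw [M.anc_eq_insert hi] at h3
    rcases Finset.mem_insert.mp h3 with h | h
    · exact absurd h.symm h2
    · exact M.mem_subt.mpr h

end TreeMC

/-- For any priority ordering `o` (here `e : Fin |S| ≃ S`, with
`o_[m]` = `Om` the set of the `m` highest-priority states, `Tm = Top(o_[m])` where `m`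
is the maximum position with `λ·Σ_{i ∈ Top(o_[m])} π(i) ≤ μ`, partially-served state
`pOpt` (`none` encodes `⊥`), and `nuP = ν^o_p`), the fluid equilibrium `(q, ν) = (q^o, ν^o)`
is a feasible solution of OriginalFluid; moreover, if `pOpt ≠ ⊥` then `Σ_{i∈S} ν_i = μ`. -/
theorem fluid_equilibrium_feasible {S : Type*} [Fintype S] [DecidableEq S]
    (M : TreeMC S)
    (lam mu : ℝ) (hlam0 : 0 < lam) (hlam1 : lam < 1) (hmu0 : 0 < mu) (hmu1 : mu ≤ 1)
    (e : Fin (Fintype.card S) ≃ S)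
    (m : ℕ) (hm : m ≤ Fintype.card S)
    (Om : Finset S)
    (hOm : Om = (Finset.univ.filter fun j : Fin (Fintype.card S) => (j : ℕ) < m).image ⇑e)
    (Tm : Finset S) (hTm : M.IsTopSet Om Tm)
    (hserve : lam * ∑ i ∈ Tm, M.pi i ≤ mu)
    (hmax : ∀ m' : ℕ, m < m' → m' ≤ Fintype.card S → ∀ T' : Finset S,
      M.IsTopSet
        ((Finset.univ.filter fun j : Fin (Fintype.card S) => (j : ℕ) < m').image ⇑e) T' →
      mu < lam * ∑ i ∈ T', M.pi i)
    (pOpt : Option S)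
    (hpsome : ∀ h : m < Fintype.card S,
      lam * ∑ i ∈ Tm, M.pi i < mu → pOpt = some (e ⟨m, h⟩))
    (hpnone : (m = Fintype.card S ∨ lam * ∑ i ∈ Tm, M.pi i = mu) → pOpt = none)
    (nuP : ℝ)
    (hnuPnone : pOpt = none → nuP = 0)
    (hnuPsome : ∀ pp : S, pOpt = some pp →
      nuP = (mu - lam * ∑ i ∈ Tm, M.pi i) /
        (1 - (∑ i ∈ Tm ∩ M.subt pp, M.pi i) / M.pi pp))
    (q ν : S → ℝ)
    -- (T-1) un-reduced states
    (hq1 : ∀ i : S, i ∉ M.subF Om → (∀ pp : S, pOpt = some pp → i ∉ M.subt pp) →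
      q i = lam * M.pi i ∧ ν i = 0)
    -- (T-2) fully-blocked states
    (hq2 : ∀ i ∈ Tm, (∀ pp : S, pOpt = some pp → i ∉ M.subt pp) →
      q i = lam * M.pi i ∧ ν i = lam * M.pi i)
    -- (T-3) empty states
    (hq3 : ∀ i ∈ M.subF Om, i ∉ Tm → q i = 0 ∧ ν i = 0)
    -- (T-4) the partially-served state
    (hq4 : ∀ pp : S, pOpt = some pp → q pp = lam * M.pi pp ∧ ν pp = nuP)
    -- (T-5) partially-blocked states
    (hq5 : ∀ pp : S, pOpt = some pp → ∀ i ∈ Tm ∩ M.subt pp,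
      q i = lam * M.pi i - nuP * M.pi i / M.pi pp ∧ ν i = q i)
    -- (T-6) partially-reduced states
    (hq6 : ∀ pp : S, pOpt = some pp → ∀ i ∈ M.subt pp, i ≠ pp → i ∉ M.subF Om →
      q i = lam * M.pi i - nuP * M.pi i / M.pi pp ∧ ν i = 0) :
    M.OrigFeasible lam mu q ν ∧ (pOpt ≠ none → ∑ i : S, ν i = mu) := by
  obtain ⟨hTm1, hTm2, hTm3⟩ := hTm
  have hTmF : Tm ⊆ M.subF Om := hTm1.trans (M.subset_subF Om)
  have hOmTm : M.subF Om ⊆ M.subF Tm := M.subF_trans hTm2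
  have hpa1 : ∀ i : S, M.pa i ∈ M.subF Om → i ∈ M.subF Om := fun i => M.mem_subF_of_pa
  have hpa3 : ∀ i : S, i ≠ M.r → i ∈ Tm → M.pa i ∉ M.subF Om := by
    intro i hir hiTm hp
    obtain ⟨t, ht, hti⟩ := M.mem_subF.mp (hOmTm hp)
    have hti' : t ∈ M.anc i := M.anc_trans hti (M.pa_mem_anc i)
    have htne : t ≠ i := by rintro rfl; exact M.not_mem_anc_pa hir hti
    exact hTm3 t ht i hiTm htne (M.mem_subt.mpr hti')
  have hpa2 : ∀ i : S, i ≠ M.r → i ∈ M.subF Om → i ∉ Tm → M.pa i ∈ M.subF Om := by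
    intro i hir hiF hiTm
    obtain ⟨t, ht, hti⟩ := M.mem_subF.mp (hOmTm hiF)
    have htne : t ≠ i := fun h => hiTm (h ▸ ht)
    rw [M.anc_eq_insert hir] at hti
    rcases Finset.mem_insert.mp hti with h | h
    · exact absurd h htne
    · exact M.mem_subF.mpr ⟨t, hTm1 ht, h⟩
  have hrTm : M.r ∈ M.subF Om → M.r ∈ Tm := by
    intro h
    obtain ⟨t, ht, hti⟩ := M.mem_subF.mp (hOmTm h)
    rw [M.anc_r, Finset.mem_singleton] at hti
    exact hti ▸ ht
  cases hpO : pOpt with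
  | none =>
    have hvac : ∀ i : S, ∀ pp : S, pOpt = some pp → i ∉ M.subt pp := by
      intro i pp hpp; rw [hpO] at hpp; cases hpp
    have hqf : ∀ i : S, q i = if i ∈ M.subF Om ∧ i ∉ Tm then 0 else lam * M.pi i := by
      intro i
      by_cases h1 : i ∈ M.subF Om
      · by_cases h2 : i ∈ Tm
        · rw [if_neg (fun h => h.2 h2), (hq2 i h2 (hvac i)).1]
        · rw [if_pos ⟨h1, h2⟩, (hq3 i h1 h2).1]
      · rw [if_neg (fun h => h1 h.1), (hq1 i h1 (hvac i)).1]
    have hνf : ∀ i : S, ν i = if i ∈ Tm then lam * M.pi i else 0 := by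
      intro i
      by_cases h2 : i ∈ Tm
      · rw [if_pos h2, (hq2 i h2 (hvac i)).2]
      · rw [if_neg h2]
        by_cases h1 : i ∈ M.subF Om
        · exact (hq3 i h1 h2).2
        · exact (hq1 i h1 (hvac i)).2
    have hsum : ∑ i : S, ν i ≤ mu := by
      have : ∑ i : S, ν i = lam * ∑ i ∈ Tm, M.pi i := by
        rw [Finset.sum_congr rfl fun i _ => hνf i, Finset.sum_ite_mem, Finset.univ_inter,
          Finset.mul_sum]
      rw [this]; exact hserve
    refine ⟨⟨?_, ?_, ?_, ?_, ?_, hsum⟩, fun h => absurd rfl h⟩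
    · intro i
      rw [hqf i]
      split_ifs
      · exact le_refl 0
      · have := M.pi_pos i
        positivity
    · intro i
      rw [hνf i]
      split_ifs
      · have := M.pi_pos i
        positivity
      · exact le_refl 0
    · have h1 : ¬(M.r ∈ M.subF Om ∧ M.r ∉ Tm) := fun ⟨a, b⟩ => b (hrTm a)
      rw [hqf M.r, if_neg h1, M.pi_r, mul_one]
    · intro i hir
      rw [hqf i, hqf (M.pa i), hνf (M.pa i), M.pi_eq hir]
      have tF : M.pa i ∈ M.subF Om ↔ i ∈ M.subF Om ∧ i ∉ Tm :=
        ⟨fun h => ⟨hpa1 i h, fun hT => hpa3 i hir hT h⟩, fun ⟨a, b⟩ => hpa2 i hir a b⟩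
      by_cases hF : M.pa i ∈ M.subF Om
      · rw [if_pos (tF.mp hF)]
        by_cases hT : M.pa i ∈ Tm
        · rw [if_neg (fun h => h.2 hT), if_pos hT]; ring
        · rw [if_pos ⟨hF, hT⟩, if_neg hT]; ring
      · have hT : M.pa i ∉ Tm := fun h => hF (hTmF h)
        rw [if_neg (fun h => hF (tF.mpr h)), if_neg (fun h => hF h.1), if_neg hT]; ring
    · intro i
      rw [hqf i, hνf i]
      by_cases h1 : i ∈ Tm
      · rw [if_pos h1, if_neg (fun h => h.2 h1)]
      · rw [if_neg h1]
        split_ifs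
        · exact le_refl 0
        · have := M.pi_pos i
          positivity
  | some pp =>
    have hlt : lam * ∑ i ∈ Tm, M.pi i < mu := by
      rcases lt_or_eq_of_le hserve with h | h
      · exact h
      · rw [hpnone (Or.inr h)] at hpO; cases hpO
    have hmlt : m < Fintype.card S := by
      rcases lt_or_eq_of_le hm with h | h
      · exact h
      · rw [hpnone (Or.inl h)] at hpO; cases hpO
    have hppE : pp = e ⟨m, hmlt⟩ := by
      have h := hpsome hmlt hlt
      rw [hpO] at h
      exact Option.some.inj h
    have hppOm : pp ∉ Om := by
      rw [hOm, hppE]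
      intro h
      simp only [Finset.mem_image, Finset.mem_filter, Finset.mem_univ, true_and] at h
      obtain ⟨j, hj, hje⟩ := h
      have := e.injective hje
      subst this
      simp at hj
    have hppTm : pp ∉ Tm := fun h => hppOm (hTm1 h)
    have hppF : pp ∉ M.subF Om := by
      intro h
      have h1 := (hq3 pp h hppTm).1
      have h2 := (hq4 pp hpO).1
      have h3 := mul_pos hlam0 (M.pi_pos pp)
      rw [← h2, h1] at h3
      exact lt_irrefl _ h3
    -- the key inequality via hmax at m+1
    have hOm' : ((Finset.univ.filter fun j : Fin (Fintype.card S) => (j : ℕ) < m + 1).image ⇑e)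
        = insert pp Om := by
      rw [hOm, hppE]
      ext x
      simp only [Finset.mem_image, Finset.mem_filter, Finset.mem_univ, true_and,
        Finset.mem_insert]
      constructor
      · rintro ⟨j, hj, rfl⟩
        rcases Nat.lt_succ_iff_lt_or_eq.mp hj with h | h
        · exact Or.inr ⟨j, h, rfl⟩
        · exact Or.inl (by congr 1; exact Fin.ext h)
      · rintro (rfl | ⟨j, hj, rfl⟩)
        · exact ⟨⟨m, hmlt⟩, Nat.lt_succ_self m, rfl⟩
        · exact ⟨j, Nat.lt_succ_of_lt hj, rfl⟩
    have hppnotin : pp ∉ Tm \ M.subt pp := fun h => (Finset.mem_sdiff.mp h).2 (M.self_mem_subt pp)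
    have hTop' : M.IsTopSet (insert pp Om) (insert pp (Tm \ M.subt pp)) := by
      refine ⟨?_, ?_, ?_⟩
      · intro x hx
        rcases Finset.mem_insert.mp hx with rfl | hx
        · exact Finset.mem_insert_self _ _
        · exact Finset.mem_insert_of_mem (hTm1 (Finset.mem_sdiff.mp hx).1)
      · intro x hx
        rcases Finset.mem_insert.mp hx with rfl | hx
        · exact M.mem_subF.mpr ⟨x, Finset.mem_insert_self _ _, M.self_mem_anc x⟩
        · obtain ⟨t, ht, htx⟩ := M.mem_subF.mp (hTm2 hx)
          by_cases hts : t ∈ M.subt pp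
          · exact M.mem_subF.mpr ⟨pp, Finset.mem_insert_self _ _,
              M.anc_trans (M.mem_subt.mp hts) htx⟩
          · exact M.mem_subF.mpr ⟨t, Finset.mem_insert_of_mem (Finset.mem_sdiff.mpr ⟨ht, hts⟩),
              htx⟩
      · intro a ha b hb hab
        rcases Finset.mem_insert.mp ha with rfl | ha <;> rcases Finset.mem_insert.mp hb with rfl | hb
        · exact absurd rfl hab
        · exact (Finset.mem_sdiff.mp hb).2
        · intro hsub
          exact hppF (M.mem_subF.mpr ⟨a, hTm1 (Finset.mem_sdiff.mp ha).1, M.mem_subt.mp hsub⟩)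
        · exact hTm3 a (Finset.mem_sdiff.mp ha).1 b (Finset.mem_sdiff.mp hb).1 hab
    have hKey0 := hmax (m + 1) (Nat.lt_succ_self m) hmlt _ (by rw [hOm']; exact hTop')
    have hsplit : ∑ i ∈ Tm ∩ M.subt pp, M.pi i + ∑ i ∈ Tm \ M.subt pp, M.pi i
        = ∑ i ∈ Tm, M.pi i := Finset.sum_inter_add_sum_sdiff Tm (M.subt pp) M.pi
    have hKey : mu < lam * (M.pi pp + ∑ i ∈ Tm, M.pi i - ∑ i ∈ Tm ∩ M.subt pp, M.pi i) := by
      rw [Finset.sum_insert hppnotin] at hKey0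
      have : M.pi pp + ∑ i ∈ Tm \ M.subt pp, M.pi i
          = M.pi pp + ∑ i ∈ Tm, M.pi i - ∑ i ∈ Tm ∩ M.subt pp, M.pi i := by linarith
      rwa [this] at hKey0
    have hPpos : 0 < M.pi pp := M.pi_pos pp
    have hBlt : ∑ i ∈ Tm ∩ M.subt pp, M.pi i < M.pi pp := by nlinarith
    have hκpos : 0 < 1 - (∑ i ∈ Tm ∩ M.subt pp, M.pi i) / M.pi pp := by
      rw [sub_pos, div_lt_one hPpos]; exact hBlt
    have hnuP := hnuPsome pp hpO
    have hnuP_pos : 0 < nuP := by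
      rw [hnuP]; exact div_pos (by linarith) hκpos
    have hnuP_le : nuP ≤ lam * M.pi pp := by
      rw [hnuP, div_le_iff₀ hκpos]
      have h2 : lam * M.pi pp * (1 - (∑ i ∈ Tm ∩ M.subt pp, M.pi i) / M.pi pp)
          = lam * (M.pi pp - ∑ i ∈ Tm ∩ M.subt pp, M.pi i) := by
        field_simp
      rw [h2]; nlinarith
    -- closed forms
    have hqf : ∀ i : S, q i = if i ∈ M.subF Om ∧ i ∉ Tm then 0
        else lam * M.pi i - nuP * (if i ∈ M.subt pp ∧ i ≠ pp then M.pi i / M.pi pp else 0) := by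
      intro i
      by_cases h1 : i ∈ M.subF Om
      · by_cases h2 : i ∈ Tm
        · have hipp : i ≠ pp := fun h => hppTm (h ▸ h2)
          by_cases h3 : i ∈ M.subt pp
          · rw [if_neg (fun h => h.2 h2), if_pos ⟨h3, hipp⟩,
              (hq5 pp hpO i (Finset.mem_inter.mpr ⟨h2, h3⟩)).1, mul_div_assoc]
          · have hnp : ∀ pp' : S, pOpt = some pp' → i ∉ M.subt pp' := by
              intro pp' h'; rw [hpO] at h'
              rw [← Option.some.inj h']; exact h3
            rw [if_neg (fun h => h.2 h2), if_neg (fun h => h3 h.1), (hq2 i h2 hnp).1, mul_zero, sub_zero]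
        · rw [if_pos ⟨h1, h2⟩, (hq3 i h1 h2).1]
      · by_cases h3 : i ∈ M.subt pp
        · by_cases h4 : i = pp
          · subst h4
            rw [if_neg (fun h => h1 h.1), if_neg (fun h => h.2 rfl), (hq4 i hpO).1, mul_zero, sub_zero]
          · rw [if_neg (fun h => h1 h.1), if_pos ⟨h3, h4⟩, (hq6 pp hpO i h3 h4 h1).1, mul_div_assoc]
        · have hnp : ∀ pp' : S, pOpt = some pp' → i ∉ M.subt pp' := by
            intro pp' h'; rw [hpO] at h'
            rw [← Option.some.inj h']; exact h3
          rw [if_neg (fun h => h1 h.1), if_neg (fun h => h3 h.1), (hq1 i h1 hnp).1, mul_zero, sub_zero]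
    have hνf : ∀ i : S, ν i =
        (if i ∈ Tm then lam * M.pi i - nuP * (if i ∈ M.subt pp then M.pi i / M.pi pp else 0)
          else 0) + (if i = pp then nuP else 0) := by
      intro i
      by_cases h2 : i ∈ Tm
      · have hipp : i ≠ pp := fun h => hppTm (h ▸ h2)
        rw [if_pos h2, if_neg hipp, add_zero]
        by_cases h3 : i ∈ M.subt pp
        · have h5 := hq5 pp hpO i (Finset.mem_inter.mpr ⟨h2, h3⟩)
          rw [if_pos h3, h5.2, h5.1, mul_div_assoc]
        · have hnp : ∀ pp' : S, pOpt = some pp' → i ∉ M.subt pp' := by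
            intro pp' h'; rw [hpO] at h'
            rw [← Option.some.inj h']; exact h3
          rw [if_neg h3, (hq2 i h2 hnp).2, mul_zero, sub_zero]
      · rw [if_neg h2, zero_add]
        by_cases h1 : i ∈ M.subF Om
        · have hipp : i ≠ pp := fun h => hppF (h ▸ h1)
          rw [if_neg hipp, (hq3 i h1 h2).2]
        · by_cases h4 : i = pp
          · subst h4
            rw [if_pos rfl, (hq4 i hpO).2]
          · rw [if_neg h4]
            by_cases h3 : i ∈ M.subt pp
            · exact (hq6 pp hpO i h3 h4 h1).2
            · have hnp : ∀ pp' : S, pOpt = some pp' → i ∉ M.subt pp' := by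
                intro pp' h'; rw [hpO] at h'
                rw [← Option.some.inj h']; exact h3
              exact (hq1 i h1 hnp).2
    have hdf : ∀ j : S, q j - ν j = if j ∈ M.subF Om then 0
        else lam * M.pi j - nuP * (if j ∈ M.subt pp then M.pi j / M.pi pp else 0) := by
      intro j
      rw [hqf j, hνf j]
      by_cases h1 : j ∈ M.subF Om
      · rw [if_pos h1]
        by_cases h2 : j ∈ Tm
        · have hjpp : j ≠ pp := fun h => hppTm (h ▸ h2)
          rw [if_neg (fun h => h.2 h2), if_pos h2, if_neg hjpp]
          by_cases h3 : j ∈ M.subt pp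
          · rw [if_pos ⟨h3, hjpp⟩, if_pos h3]; ring
          · rw [if_neg (fun h => h3 h.1), if_neg h3]; ring
        · have hjpp : j ≠ pp := fun h => hppF (h ▸ h1)
          rw [if_pos ⟨h1, h2⟩, if_neg h2, if_neg hjpp]; ring
      · have h2 : j ∉ Tm := fun h => h1 (hTmF h)
        rw [if_neg h1, if_neg (fun h => h1 h.1), if_neg h2]
        by_cases h4 : j = pp
        · subst h4
          rw [if_neg (fun h => h.2 rfl), if_pos rfl, if_pos (M.self_mem_subt j),
            div_self (ne_of_gt hPpos)]
          ring
        · rw [if_neg h4]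
          by_cases h3 : j ∈ M.subt pp
          · rw [if_pos ⟨h3, h4⟩, if_pos h3]; ring
          · rw [if_neg (fun h => h3 h.1), if_neg h3]; ring
    have hq_nonneg : ∀ i : S, 0 ≤ q i := by
      intro i
      rw [hqf i]
      split_ifs with h1 h2
      · exact le_refl 0
      · have hip := M.pi_pos i
        have hcan : M.pi pp * (M.pi i / M.pi pp) = M.pi i :=
          mul_div_cancel₀ _ (ne_of_gt hPpos)
        have hdp : 0 < M.pi i / M.pi pp := div_pos hip hPpos
        nlinarith
      · have hip := M.pi_pos i
        nlinarith
    have hsum : ∑ i : S, ν i = mu := by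
      have e1 : ∑ i : S, ν i =
          (∑ i : S, if i ∈ Tm then lam * M.pi i
            - nuP * (if i ∈ M.subt pp then M.pi i / M.pi pp else 0) else 0)
          + ∑ i : S, (if i = pp then nuP else 0) := by
        rw [← Finset.sum_add_distrib]
        exact Finset.sum_congr rfl fun i _ => hνf i
      rw [e1, Finset.sum_ite_mem, Finset.univ_inter, Finset.sum_ite_eq' Finset.univ pp,
        if_pos (Finset.mem_univ pp), Finset.sum_sub_distrib, ← Finset.mul_sum, ← Finset.mul_sum,
        Finset.sum_ite_mem, ← Finset.sum_div]
      have h2 : nuP * (1 - (∑ i ∈ Tm ∩ M.subt pp, M.pi i) / M.pi pp)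
          = mu - lam * ∑ i ∈ Tm, M.pi i := by
        rw [hnuP, div_mul_cancel₀ _ (ne_of_gt hκpos)]
      linear_combination h2
    refine ⟨⟨hq_nonneg, ?_, ?_, ?_, ?_, le_of_eq hsum⟩, fun _ => hsum⟩
    · intro i
      have := hdf i
      have hq := hq_nonneg i
      rw [hνf i]
      by_cases h2 : i ∈ Tm
      · have hipp : i ≠ pp := fun h => hppTm (h ▸ h2)
        rw [if_pos h2, if_neg hipp, add_zero]
        by_cases h3 : i ∈ M.subt pp
        · rw [if_pos h3]
          have hip := M.pi_pos i
          have hcan : M.pi pp * (M.pi i / M.pi pp) = M.pi i :=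
            mul_div_cancel₀ _ (ne_of_gt hPpos)
          have hdp : 0 < M.pi i / M.pi pp := div_pos hip hPpos
          nlinarith
        · rw [if_neg h3, mul_zero, sub_zero]
          have hip := M.pi_pos i
          positivity
      · rw [if_neg h2, zero_add]
        split_ifs
        · exact le_of_lt hnuP_pos
        · exact le_refl 0
    · have h1 : ¬(M.r ∈ M.subF Om ∧ M.r ∉ Tm) := fun ⟨a, b⟩ => b (hrTm a)
      have h2 : ¬(M.r ∈ M.subt pp ∧ M.r ≠ pp) := by
        rintro ⟨a, b⟩
        have := M.mem_subt.mp a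
        rw [M.anc_r, Finset.mem_singleton] at this
        exact b this.symm
      rw [hqf M.r, if_neg h1, if_neg h2, M.pi_r, mul_zero, sub_zero, mul_one]
    · intro i hir
      rw [hqf i, hdf (M.pa i), M.pi_eq hir]
      have tF : M.pa i ∈ M.subF Om ↔ i ∈ M.subF Om ∧ i ∉ Tm :=
        ⟨fun h => ⟨hpa1 i h, fun hT => hpa3 i hir hT h⟩, fun ⟨a, b⟩ => hpa2 i hir a b⟩
      have tS : M.pa i ∈ M.subt pp ↔ (i ∈ M.subt pp ∧ i ≠ pp) := M.mem_subt_pa_iff hir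
      by_cases hF : M.pa i ∈ M.subF Om
      · rw [if_pos (tF.mp hF), if_pos hF]; ring
      · rw [if_neg (fun h => hF (tF.mpr h)), if_neg hF]
        by_cases hS : M.pa i ∈ M.subt pp
        · rw [if_pos (tS.mp hS), if_pos hS]
          field_simp
        · rw [if_neg (fun h => hS (tS.mpr h)), if_neg hS]; ring
    · intro i
      have hd := hdf i
      by_cases h1 : i ∈ M.subF Om
      · rw [if_pos h1] at hd; linarith
      · rw [if_neg h1] at hd
        by_cases h3 : i ∈ M.subt pp
        · rw [if_pos h3] at hd
          by_cases h4 : i = pp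
          · subst h4
            rw [div_self (ne_of_gt hPpos), mul_one] at hd
            linarith
          · have hq6' := (hq6 pp hpO i h3 h4 h1).2
            rw [hq6']
            exact hq_nonneg i
        · rw [if_neg h3, mul_zero, sub_zero] at hd
          have hnp : ∀ pp' : S, pOpt = some pp' → i ∉ M.subt pp' := by
            intro pp' h'; rw [hpO] at h'
            rw [← Option.some.inj h']; exact h3
          rw [(hq1 i h1 hnp).2]
          exact hq_nonneg i
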